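/- Let F be a field and let α ∈ F be such that the Weierstrass curve E(α, α) : y² + (1 − α)xy − αy = x³ − αx² over F is nonsingular (i.e., its discriminant is nonzero). Then the point P = (0, 0) lies on E(α, α), has exact order 5 in the group of points E(α, α)(F), and the x-coordinate of 2P equals α. -/

import Mathlib

/-- The `x`-coordinate of a nonsingular rational point on a Weierstrass curve
(with the point at infinity sent to `0`). -/
noncomputable def ptX {F : Type*} [Field F] {W : WeierstrassCurve.Affine F} : W.Point → F
  | .zero => 0
  | .some x _ _ => x

lemma some_eq_some_aux {F : Type*} [Field F] {W : WeierstrassCurve.Affine F} {x₁ y₁ x₂ y₂ : F}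
    (hx : x₁ = x₂) (hy : y₁ = y₂) (h₁ : W.Nonsingular x₁ y₁) (h₂ : W.Nonsingular x₂ y₂) :
    WeierstrassCurve.Affine.Point.some x₁ y₁ h₁ = WeierstrassCurve.Affine.Point.some x₂ y₂ h₂ := by
  subst hx; subst hy; rfl

open Classical in
/-- **The `m = 5` family of Table 2.** On the nonsingular Weierstrass curve
`E(α, α) : y² + (1 - α)xy - αy = x³ - αx²`, the point `P = (0, 0)` is a nonsingular point of
exact order 5, and the `x`-coordinate of `2P` is `α`. -/
theorem order_five_family {F : Type*} [Field F] (α : F)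
    (W : WeierstrassCurve.Affine F)
    (hW : W = { a₁ := 1 - α, a₂ := -α, a₃ := -α, a₄ := 0, a₆ := 0 })
    (hΔ : W.Δ ≠ 0) :
    ∃ h : W.Nonsingular 0 0, addOrderOf (WeierstrassCurve.Affine.Point.some 0 0 h) = 5 ∧
      ptX (2 • WeierstrassCurve.Affine.Point.some 0 0 h) = α := by
  subst hW
  set W : WeierstrassCurve.Affine F :=
    { a₁ := 1 - α, a₂ := -α, a₃ := -α, a₄ := 0, a₆ := 0 } with hWdef
  have ha₁ : W.a₁ = 1 - α := rfl
  have ha₂ : W.a₂ = -α := rfl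
  have ha₃ : W.a₃ = -α := rfl
  have ha₄ : W.a₄ = 0 := rfl
  have ha₆ : W.a₆ = 0 := rfl
  have hα : α ≠ 0 := by
    rintro rfl
    apply hΔ
    simp only [WeierstrassCurve.Δ, WeierstrassCurve.b₂, WeierstrassCurve.b₄,
      WeierstrassCurve.b₆, WeierstrassCurve.b₈, ha₁, ha₂, ha₃, ha₄, ha₆]
    ring
  have heq : W.Equation 0 0 := by
    rw [WeierstrassCurve.Affine.equation_iff]
    ring
  have h : W.Nonsingular 0 0 := (W.equation_iff_nonsingular_of_Δ_ne_zero hΔ).mp heq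
  -- negY computations
  have hneg00 : W.negY 0 0 = α := by
    simp [WeierstrassCurve.Affine.negY, ha₁, ha₃]
  have hnegP : (0 : F) ≠ W.negY 0 0 := by rw [hneg00]; exact (Ne.symm hα)
  -- 2P
  have heq2 : W.Equation α (α ^ 2) := by
    rw [WeierstrassCurve.Affine.equation_iff, ha₁, ha₂, ha₃, ha₄, ha₆]
    ring
  have h2 : W.Nonsingular α (α ^ 2) := (W.equation_iff_nonsingular_of_Δ_ne_zero hΔ).mp heq2
  have heq3 : W.Equation α 0 := by
    rw [WeierstrassCurve.Affine.equation_iff, ha₁, ha₂, ha₃, ha₄, ha₆]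
    ring
  have h3 : W.Nonsingular α 0 := (W.equation_iff_nonsingular_of_Δ_ne_zero hΔ).mp heq3
  have heq4 : W.Equation 0 α := by
    rw [WeierstrassCurve.Affine.equation_iff, ha₁, ha₂, ha₃, ha₄, ha₆]
    ring
  have h4 : W.Nonsingular 0 α := (W.equation_iff_nonsingular_of_Δ_ne_zero hΔ).mp heq4
  set P := WeierstrassCurve.Affine.Point.some 0 0 h with hP
  -- slope for doubling
  have hs1 : W.slope 0 0 0 0 = 0 := by
    rw [WeierstrassCurve.Affine.slope_of_Y_ne rfl hnegP, ha₁, ha₂, ha₄]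
    ring
  have e2 : P + P = WeierstrassCurve.Affine.Point.some _ _ h2 := by
    rw [hP, WeierstrassCurve.Affine.Point.add_of_Y_ne hnegP]
    refine some_eq_some_aux ?_ ?_ _ _
    · rw [WeierstrassCurve.Affine.addX, hs1, ha₁, ha₂]; ring
    · rw [WeierstrassCurve.Affine.addY, WeierstrassCurve.Affine.negAddY,
        WeierstrassCurve.Affine.addX, WeierstrassCurve.Affine.negY, hs1, ha₁, ha₂, ha₃]
      ring
  have hs2 : W.slope α 0 (α ^ 2) 0 = α := by
    rw [WeierstrassCurve.Affine.slope_of_X_ne hα]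
    field_simp
    ring
  have e3 : WeierstrassCurve.Affine.Point.some _ _ h2 + P = WeierstrassCurve.Affine.Point.some _ _ h3 := by
    rw [hP, WeierstrassCurve.Affine.Point.add_of_X_ne hα]
    refine some_eq_some_aux ?_ ?_ _ _
    · rw [WeierstrassCurve.Affine.addX, hs2, ha₁, ha₂]; ring
    · rw [WeierstrassCurve.Affine.addY, WeierstrassCurve.Affine.negAddY,
        WeierstrassCurve.Affine.addX, WeierstrassCurve.Affine.negY, hs2, ha₁, ha₂, ha₃]
      ring
  have hs3 : W.slope α 0 0 0 = 0 := by
    rw [WeierstrassCurve.Affine.slope_of_X_ne hα]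
    simp
  have e4 : WeierstrassCurve.Affine.Point.some _ _ h3 + P = WeierstrassCurve.Affine.Point.some _ _ h4 := by
    rw [hP, WeierstrassCurve.Affine.Point.add_of_X_ne hα]
    refine some_eq_some_aux ?_ ?_ _ _
    · rw [WeierstrassCurve.Affine.addX, hs3, ha₁, ha₂]; ring
    · rw [WeierstrassCurve.Affine.addY, WeierstrassCurve.Affine.negAddY,
        WeierstrassCurve.Affine.addX, WeierstrassCurve.Affine.negY, hs3, ha₁, ha₂, ha₃]
      ring
  have e5 : WeierstrassCurve.Affine.Point.some _ _ h4 + P = 0 := by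
    rw [hP]
    exact WeierstrassCurve.Affine.Point.add_of_Y_eq rfl hneg00.symm
  have h5P : (5 : ℕ) • P = 0 := by
    have : (5 : ℕ) • P = P + P + P + P + P := by
      rw [succ_nsmul, succ_nsmul, succ_nsmul, succ_nsmul, one_nsmul]
    rw [this, e2, e3, e4, e5]
  haveI : Fact (Nat.Prime 5) := ⟨by norm_num⟩
  refine ⟨h, ?_, ?_⟩
  · exact addOrderOf_eq_prime h5P (WeierstrassCurve.Affine.Point.some_ne_zero h)
  · rw [two_nsmul, ← hP, e2]
    rfl
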